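/- Let p be a prime and n ≥ 1. The number of polynomial functions on ℤ/p^nℤ is |F_n| = p^{Σ_{k=1}^n β_p(k)}. -/

import Mathlib

/-- `α_p(n)`: the `p`-adic valuation of `n!`. -/
def alphaP (p n : ℕ) : ℕ := padicValNat p (Nat.factorial n)

/-- `β_p(n)`: the least `m` with `α_p(m) ≥ n`. -/
noncomputable def betaP (p n : ℕ) : ℕ := sInf {m | n ≤ alphaP p m}

open Polynomial Finset

section Aux

variable {p : ℕ} [hp : Fact p.Prime]

lemma alphaP_mono {a b : ℕ} (h : a ≤ b) : alphaP p a ≤ alphaP p b := by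
  have hd : (p : ℕ) ^ alphaP p a ∣ Nat.factorial b :=
    dvd_trans pow_padicValNat_dvd (Nat.factorial_dvd_factorial h)
  exact (padicValNat_dvd_iff_le (Nat.factorial_ne_zero b)).mp hd

lemma betaP_nonempty (n : ℕ) : {m | n ≤ alphaP p m}.Nonempty := by
  refine ⟨p * n, ?_⟩
  show n ≤ alphaP p (p * n)
  unfold alphaP
  rw [padicValNat_factorial_mul]
  omega

lemma alphaP_betaP (n : ℕ) : n ≤ alphaP p (betaP p n) :=
  Nat.sInf_mem (betaP_nonempty n)

lemma lt_betaP {k n : ℕ} : k < betaP p n ↔ alphaP p k < n := by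
  constructor
  · intro h
    by_contra hc
    have h2 : betaP p n ≤ k := by
      rw [betaP]
      exact Nat.sInf_le (show k ∈ {m | n ≤ alphaP p m} from not_lt.mp hc)
    omega
  · intro h
    by_contra hc
    have h2 : alphaP p (betaP p n) ≤ alphaP p k := alphaP_mono (not_lt.mp hc)
    have h3 := alphaP_betaP (p := p) n
    omega

lemma count_identity (n : ℕ) :
    ∑ j ∈ Icc 1 n, betaP p j + ∑ k ∈ range (betaP p n), alphaP p k
      = n * betaP p n := by
  have h1 : ∀ j ∈ Icc 1 n, betaP p j
      = ((range (betaP p n)).filter (fun k => alphaP p k < j)).card := by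
    intro j hj
    have hji : j ≤ n := (mem_Icc.mp hj).2
    have hb : betaP p j ≤ betaP p n := by
      by_contra hc
      have := lt_betaP.mp (lt_of_not_ge hc)
      exact absurd (le_trans hji (alphaP_betaP n)) (not_le.mpr this)
    have : (range (betaP p n)).filter (fun k => alphaP p k < j)
        = range (betaP p j) := by
      ext k
      simp only [mem_filter, mem_range]
      constructor
      · rintro ⟨_, hk⟩; exact lt_betaP.mpr hk
      · intro hk; exact ⟨lt_of_lt_of_le hk hb, lt_betaP.mp hk⟩
    rw [this, card_range]
  have h2 : ∀ k ∈ range (betaP p n), alphaP p k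
      = ((Icc 1 n).filter (fun j => ¬ alphaP p k < j)).card := by
    intro k hk
    have hαn : alphaP p k < n := lt_betaP.mp (mem_range.mp hk)
    have : (Icc 1 n).filter (fun j => ¬ alphaP p k < j)
        = Icc 1 (alphaP p k) := by
      ext j
      simp only [mem_filter, mem_Icc]
      omega
    rw [this, Nat.card_Icc]
    omega
  rw [Finset.sum_congr rfl h1, Finset.sum_congr rfl h2]
  simp only [Finset.card_filter]
  rw [Finset.sum_comm]
  rw [← Finset.sum_add_distrib]
  have : ∀ k ∈ range (betaP p n),
      ((∑ j ∈ Icc 1 n, if alphaP p k < j then 1 else 0)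
        + ∑ j ∈ Icc 1 n, if ¬ alphaP p k < j then 1 else 0) = n := by
    intro k _
    rw [← Finset.sum_add_distrib]
    have : ∀ j ∈ Icc 1 n,
        ((if alphaP p k < j then 1 else 0)
          + (if ¬ alphaP p k < j then 1 else 0)) = 1 := by
      intro j _
      by_cases hc : alphaP p k < j <;> simp [hc]
    rw [Finset.sum_congr rfl this, Finset.sum_const, Nat.card_Icc, smul_eq_mul,
      mul_one]
    omega
  rw [Finset.sum_congr rfl this, Finset.sum_const, card_range, smul_eq_mul,
    mul_comm]

end Aux

lemma aeval_descPoch (N v k : ℕ) :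
    (Polynomial.aeval ((v : ℕ) : ZMod N)) (descPochhammer ℤ k)
      = ((v.descFactorial k : ℕ) : ZMod N) := by
  rw [Polynomial.aeval_def, Polynomial.eval₂_at_natCast,
    descPochhammer_eval_eq_descFactorial]
  simp

lemma descPoch_span (f : Polynomial ℤ) :
    f ∈ Submodule.span ℤ (Set.range (descPochhammer ℤ)) := by
  have H : ∀ n : ℕ, ∀ f : Polynomial ℤ, f.natDegree ≤ n →
      f ∈ Submodule.span ℤ (Set.range (descPochhammer ℤ)) := by
    intro n
    induction n with
    | zero =>
      intro f hf
      have : f = f.coeff 0 • descPochhammer ℤ 0 := by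
        rw [descPochhammer_zero, Polynomial.eq_C_of_natDegree_le_zero hf]
        simp [Polynomial.C_eq_intCast, zsmul_eq_mul]
      rw [this]
      exact Submodule.smul_mem _ _ (Submodule.subset_span ⟨0, rfl⟩)
    | succ n ih =>
      intro f hf
      have hdq : (descPochhammer ℤ (n + 1)).natDegree = n + 1 :=
        descPochhammer_natDegree ℤ (n + 1)
      have hmono : (descPochhammer ℤ (n + 1)).Monic := monic_descPochhammer ℤ (n + 1)
      set q : Polynomial ℤ := f.coeff (n + 1) • descPochhammer ℤ (n + 1) with hq
      have hsub : (f - q).natDegree ≤ n := by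
        rw [Polynomial.natDegree_le_iff_coeff_eq_zero]
        intro m hm
        have hqc : q.coeff m = f.coeff (n + 1) * (descPochhammer ℤ (n + 1)).coeff m := by
          rw [hq, Polynomial.coeff_smul, smul_eq_mul]
        rcases eq_or_lt_of_le (Nat.succ_le_of_lt hm) with h | h
        · have hd1 : (descPochhammer ℤ (n + 1)).coeff m = 1 := by
            have h2 := hmono.coeff_natDegree
            rw [hdq] at h2
            subst h
            exact h2
          rw [Polynomial.coeff_sub, hqc, hd1, mul_one, ← h, sub_self]
        · have hfm : f.coeff m = 0 :=
            Polynomial.coeff_eq_zero_of_natDegree_lt (lt_of_le_of_lt hf h)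
          have hdm : (descPochhammer ℤ (n + 1)).coeff m = 0 :=
            Polynomial.coeff_eq_zero_of_natDegree_lt (by rw [hdq]; exact h)
          rw [Polynomial.coeff_sub, hqc, hfm, hdm, mul_zero, sub_zero]
      have h1 : f - q ∈ Submodule.span ℤ (Set.range (descPochhammer ℤ)) := ih _ hsub
      have h2 : q ∈ Submodule.span ℤ (Set.range (descPochhammer ℤ)) :=
        Submodule.smul_mem _ _ (Submodule.subset_span ⟨n + 1, rfl⟩)
      have := Submodule.add_mem _ h1 h2
      rwa [sub_add_cancel] at this
  exact H f.natDegree f le_rfl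

/-- The evaluation map from coefficient tuples (w.r.t. the falling-factorial basis)
to functions. -/
noncomputable def polyT (N B : ℕ) : (Fin B → ZMod N) →+ (ZMod N → ZMod N) where
  toFun c := fun x => ∑ k : Fin B, c k * (Polynomial.aeval x) (descPochhammer ℤ (k : ℕ))
  map_zero' := by funext x; simp
  map_add' c d := by funext x; simp [add_mul, Finset.sum_add_distrib]

lemma polyT_apply (N B : ℕ) (c : Fin B → ZMod N) (x : ZMod N) :
    polyT N B c x = ∑ k : Fin B, c k * (Polynomial.aeval x) (descPochhammer ℤ (k : ℕ)) := rfl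

lemma polyT_eq_zero_iff (N B : ℕ) [NeZero N] (c : Fin B → ZMod N) :
    polyT N B c = 0 ↔
      ∀ k : Fin B, (((k : ℕ).factorial : ℕ) : ZMod N) * c k = 0 := by
  constructor
  · intro h
    have key : ∀ j, ∀ hj : j < B, ((j.factorial : ℕ) : ZMod N) * c ⟨j, hj⟩ = 0 := by
      intro j
      induction j using Nat.strong_induction_on with
      | _ j IH =>
        intro hj
        have h0 : polyT N B c ((j : ℕ) : ZMod N) = 0 := by rw [h]; rfl
        rw [polyT_apply] at h0
        rw [Finset.sum_congr rfl (fun k _ => by rw [aeval_descPoch])] at h0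
        have hsum : ∑ k : Fin B, c k * ((j.descFactorial (k : ℕ) : ℕ) : ZMod N)
            = c ⟨j, hj⟩ * ((j.descFactorial j : ℕ) : ZMod N) := by
          refine Finset.sum_eq_single_of_mem
            (f := fun k : Fin B => c k * ((j.descFactorial (k : ℕ) : ℕ) : ZMod N))
            ⟨j, hj⟩ (Finset.mem_univ _) ?_
          intro b _ hbne
          show c b * ((j.descFactorial (b : ℕ) : ℕ) : ZMod N) = 0
          rcases lt_or_gt_of_ne (fun hc : (b : ℕ) = j => hbne (Fin.ext hc)) with hlt | hgt
          · have hz := IH (b : ℕ) hlt b.isLt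
            rw [Fin.eta] at hz
            rw [Nat.descFactorial_eq_factorial_mul_choose]
            have : c b * (((b : ℕ).factorial * j.choose (b : ℕ) : ℕ) : ZMod N)
                = ((((b : ℕ).factorial : ℕ) : ZMod N) * c b)
                    * ((j.choose (b : ℕ) : ℕ) : ZMod N) := by
              push_cast; ring
            rw [this, hz, zero_mul]
          · rw [Nat.descFactorial_eq_zero_iff_lt.mpr hgt, Nat.cast_zero, mul_zero]
        rw [hsum, Nat.descFactorial_self, mul_comm] at h0
        exact h0
    intro k
    have hk := key (k : ℕ) k.isLt
    rwa [Fin.eta] at hk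
  · intro h
    funext x
    show (∑ k : Fin B, c k * (Polynomial.aeval x) (descPochhammer ℤ (k : ℕ))) = 0
    have hx : ((x.val : ℕ) : ZMod N) = x := ZMod.natCast_rightInverse x
    apply Finset.sum_eq_zero
    intro k _
    rw [← hx, aeval_descPoch, Nat.descFactorial_eq_factorial_mul_choose]
    have : c k * (((k : ℕ).factorial * x.val.choose (k : ℕ) : ℕ) : ZMod N)
        = ((((k : ℕ).factorial : ℕ) : ZMod N) * c k)
            * ((x.val.choose (k : ℕ) : ℕ) : ZMod N) := by
      push_cast; ring
    rw [this, h k, zero_mul]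

lemma card_ann (N a : ℕ) [NeZero N] :
    Nat.card {y : ZMod N // (a : ZMod N) * y = 0} = Nat.gcd N a := by
  set φ : ZMod N →+ ZMod N := AddMonoidHom.mulLeft ((a : ℕ) : ZMod N) with hφ
  have hker : ∀ y : ZMod N, ((a : ℕ) : ZMod N) * y = 0 ↔ y ∈ φ.ker := by
    intro y
    rw [AddMonoidHom.mem_ker]
    rfl
  have hrange : φ.range = AddSubgroup.zmultiples ((a : ℕ) : ZMod N) := by
    ext y
    simp only [AddMonoidHom.mem_range, AddSubgroup.mem_zmultiples_iff]
    constructor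
    · rintro ⟨c, rfl⟩
      refine ⟨((c.val : ℕ) : ℤ), ?_⟩
      rw [zsmul_eq_mul]
      push_cast
      rw [ZMod.natCast_rightInverse c, mul_comm]
      rfl
    · rintro ⟨z, rfl⟩
      exact ⟨(z : ZMod N), by rw [zsmul_eq_mul, mul_comm]; rfl⟩
  have h1 : Nat.card (ZMod N) = Nat.card (ZMod N ⧸ φ.ker) * Nat.card φ.ker :=
    AddSubgroup.card_eq_card_quotient_mul_card_addSubgroup φ.ker
  have h2 : Nat.card (ZMod N ⧸ φ.ker) = Nat.card φ.range :=
    Nat.card_congr (QuotientAddGroup.quotientKerEquivRange φ).toEquiv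
  have h3 : Nat.card φ.range = N / N.gcd a := by
    rw [hrange, Nat.card_zmultiples]
    exact ZMod.addOrderOf_coe a (NeZero.ne N)
  have hN : Nat.card (ZMod N) = N := Nat.card_zmod N
  have hcongr : Nat.card {y : ZMod N // ((a : ℕ) : ZMod N) * y = 0} = Nat.card φ.ker :=
    Nat.card_congr (Equiv.subtypeEquivRight hker)
  have hg : N.gcd a ∣ N := Nat.gcd_dvd_left N a
  have hq : N / N.gcd a * N.gcd a = N := Nat.div_mul_cancel hg
  have hpos : 0 < N / N.gcd a := by
    rcases Nat.eq_zero_or_pos (N / N.gcd a) with h | h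
    · rw [h, zero_mul] at hq
      exact absurd hq.symm (NeZero.ne N)
    · exact h
  rw [hcongr]
  have hmain : N = N / N.gcd a * Nat.card φ.ker := by
    rw [← h3, ← h2, ← h1, hN]
  exact (Nat.eq_of_mul_eq_mul_left hpos (hq.trans hmain)).symm

lemma gcd_pow_factorial (p n k : ℕ) [hp : Fact p.Prime] :
    Nat.gcd (p ^ n) (Nat.factorial k) = p ^ (min n (alphaP p k)) := by
  apply Nat.dvd_antisymm
  · obtain ⟨j, hj, he⟩ :=
      (Nat.dvd_prime_pow hp.out).mp (Nat.gcd_dvd_left (p ^ n) (Nat.factorial k))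
    have hjk : p ^ j ∣ Nat.factorial k := by
      rw [← he]; exact Nat.gcd_dvd_right _ _
    have hα : j ≤ alphaP p k :=
      (padicValNat_dvd_iff_le (Nat.factorial_ne_zero k)).mp hjk
    rw [he]
    exact pow_dvd_pow p (le_min hj hα)
  · refine Nat.dvd_gcd (pow_dvd_pow p (min_le_left _ _)) ?_
    exact dvd_trans (pow_dvd_pow p (min_le_right n (alphaP p k))) pow_padicValNat_dvd

lemma card_ker_polyT (p n : ℕ) [hp : Fact p.Prime] [NeZero (p ^ n)] :
    Nat.card ((polyT (p ^ n) (betaP p n)).ker)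
      = p ^ (∑ k ∈ range (betaP p n), alphaP p k) := by
  set N := p ^ n with hN
  set B := betaP p n with hB
  have e : {c : Fin B → ZMod N // polyT N B c = 0}
      ≃ ∀ k : Fin B, {y : ZMod N // (((k : ℕ).factorial : ℕ) : ZMod N) * y = 0} :=
    { toFun := fun c k => ⟨c.1 k, (polyT_eq_zero_iff N B c.1).mp c.2 k⟩
      invFun := fun y => ⟨fun k => (y k).1,
        (polyT_eq_zero_iff N B _).mpr (fun k => (y k).2)⟩
      left_inv := fun c => rfl
      right_inv := fun y => rfl }
  have hcongr : Nat.card ((polyT N B).ker)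
      = Nat.card {c : Fin B → ZMod N // polyT N B c = 0} :=
    Nat.card_congr (Equiv.subtypeEquivRight fun c => AddMonoidHom.mem_ker)
  rw [hcongr, Nat.card_congr e, Nat.card_pi]
  have : ∀ k : Fin B, Nat.card {y : ZMod N // (((k : ℕ).factorial : ℕ) : ZMod N) * y = 0}
      = p ^ alphaP p (k : ℕ) := by
    intro k
    rw [card_ann N ((k : ℕ).factorial), hN, gcd_pow_factorial]
    congr 1
    have := lt_betaP.mp (show (k : ℕ) < betaP p n from k.isLt)
    omega
  rw [Finset.prod_congr rfl (fun k _ => this k), Finset.prod_pow_eq_pow_sum]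
  congr 1
  exact Fin.sum_univ_eq_sum_range (fun k => alphaP p k) B

theorem card_polynomial_functions (p : ℕ) (hp : p.Prime) (n : ℕ) (hn : 1 ≤ n) :
    Nat.card {g : ZMod (p ^ n) → ZMod (p ^ n) //
        ∃ f : Polynomial ℤ, g = fun x => Polynomial.aeval x f} =
      p ^ (∑ k ∈ Finset.Icc 1 n, betaP p k) := by
  haveI : Fact p.Prime := ⟨hp⟩
  haveI : NeZero (p ^ n) := ⟨pow_ne_zero n hp.ne_zero⟩
  have hset : ∀ g : ZMod (p ^ n) → ZMod (p ^ n),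
      (∃ f : Polynomial ℤ, g = fun x => Polynomial.aeval x f) ↔
        g ∈ (polyT (p ^ n) (betaP p n)).range := by
    intro g
    rw [AddMonoidHom.mem_range]
    constructor
    · rintro ⟨f, rfl⟩
      obtain ⟨c, hc⟩ := Finsupp.mem_span_range_iff_exists_finsupp.mp (descPoch_span f)
      refine ⟨fun k => ((c (k : ℕ) : ℤ) : ZMod (p ^ n)), ?_⟩
      funext x
      rw [polyT_apply]
      have hx : ((x.val : ℕ) : ZMod (p ^ n)) = x := ZMod.natCast_rightInverse x
      set t : ℕ → ZMod (p ^ n) :=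
        fun k => ((c k : ℤ) : ZMod (p ^ n)) * (Polynomial.aeval x) (descPochhammer ℤ k)
        with ht
      have hf : (Polynomial.aeval x) f = ∑ k ∈ c.support, t k := by
        rw [← hc, Finsupp.sum, map_sum]
        apply Finset.sum_congr rfl
        intro k _
        rw [map_zsmul, zsmul_eq_mul, ht]
      have h1 : ∑ k ∈ c.support, t k = ∑ k ∈ c.support ∪ range (betaP p n), t k := by
        apply Finset.sum_subset Finset.subset_union_left
        intro k _ hk
        have hc0 : c k = 0 := Finsupp.notMem_support_iff.mp hk
        rw [ht]
        simp [hc0]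
      have h2 : ∑ k ∈ range (betaP p n), t k
          = ∑ k ∈ c.support ∪ range (betaP p n), t k := by
        apply Finset.sum_subset Finset.subset_union_right
        intro k _ hk
        have hkB : betaP p n ≤ k := le_of_not_gt (fun hc2 => hk (mem_range.mpr hc2))
        have hα : n ≤ alphaP p k :=
          le_of_not_gt (fun h => absurd (lt_betaP.mpr h) (not_lt.mpr hkB))
        have hdvd : p ^ n ∣ Nat.factorial k :=
          (padicValNat_dvd_iff_le (Nat.factorial_ne_zero k)).mpr hα
        have hdvd2 : p ^ n ∣ x.val.descFactorial k :=
          dvd_trans hdvd (Nat.factorial_dvd_descFactorial _ _)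
        have hz : (Polynomial.aeval x) (descPochhammer ℤ k) = 0 := by
          rw [← hx, aeval_descPoch]
          exact (ZMod.natCast_eq_zero_iff _ _).mpr hdvd2
        rw [ht]
        simp [hz]
      show (∑ k : Fin (betaP p n), t (k : ℕ)) = (Polynomial.aeval x) f
      rw [hf, h1, ← h2]
      exact Fin.sum_univ_eq_sum_range t (betaP p n)
    · rintro ⟨c, rfl⟩
      refine ⟨∑ k : Fin (betaP p n),
        Polynomial.C (((c k).val : ℕ) : ℤ) * descPochhammer ℤ (k : ℕ), ?_⟩
      funext x
      rw [polyT_apply, map_sum]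
      apply Finset.sum_congr rfl
      intro k _
      rw [map_mul, Polynomial.aeval_C]
      congr 1
      simp only [algebraMap_int_eq, eq_intCast, Int.cast_natCast]
      exact (ZMod.natCast_rightInverse (c k)).symm
  have hcard1 : Nat.card {g : ZMod (p ^ n) → ZMod (p ^ n) //
        ∃ f : Polynomial ℤ, g = fun x => Polynomial.aeval x f}
      = Nat.card ((polyT (p ^ n) (betaP p n)).range) :=
    Nat.card_congr (Equiv.subtypeEquivRight hset)
  have hiso : Nat.card (Fin (betaP p n) → ZMod (p ^ n))
      = Nat.card ((polyT (p ^ n) (betaP p n)).range)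
          * Nat.card ((polyT (p ^ n) (betaP p n)).ker) := by
    rw [AddSubgroup.card_eq_card_quotient_mul_card_addSubgroup
      (polyT (p ^ n) (betaP p n)).ker]
    congr 1
    exact Nat.card_congr
      (QuotientAddGroup.quotientKerEquivRange (polyT (p ^ n) (betaP p n))).toEquiv
  have hdom : Nat.card (Fin (betaP p n) → ZMod (p ^ n)) = (p ^ n) ^ (betaP p n) := by
    rw [Nat.card_pi]
    simp [Nat.card_zmod]
  have hker := card_ker_polyT p n
  have hid := count_identity (p := p) n
  have hfin : Nat.card ((polyT (p ^ n) (betaP p n)).range)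
        * p ^ (∑ k ∈ range (betaP p n), alphaP p k)
      = p ^ (∑ j ∈ Icc 1 n, betaP p j)
        * p ^ (∑ k ∈ range (betaP p n), alphaP p k) := by
    rw [← pow_add, hid, ← hker, ← hiso, hdom, ← pow_mul]
  have hpos : 0 < p ^ (∑ k ∈ range (betaP p n), alphaP p k) :=
    Nat.pow_pos hp.pos
  rw [hcard1]
  exact Nat.eq_of_mul_eq_mul_right hpos hfin
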